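/- For every real n×n matrix A one has det(∑_{m=0}^∞ A^m/(m+1)!) = exp(tr(A)/2) · det(∑_{m=0}^∞ A^{2m}/(4^m (2m+1)!)). (This is the matrix identity (e^x−1)/x = e^{x/2}·sinh(x/2)/(x/2) at the level of determinants, used to compute the determinant of the bi-invariant metric on the isometry group.) -/

import Mathlib

open Matrix

open Finset

lemma odd_choose_sum (m : ℕ) :
    ∑ j ∈ Finset.range (m + 2), (if Odd j then ((m+1).choose j : ℝ) else 0) = 2 ^ m := by
  have h1 : ∑ j ∈ Finset.range (m + 2), (((m+1).choose j : ℝ)) = 2 ^ (m+1) := by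
    exact_mod_cast congrArg (Nat.cast : ℕ → ℝ) (Nat.sum_range_choose (m+1))
  have h2 : ∑ j ∈ Finset.range (m + 2), ((-1 : ℝ)) ^ j * ((m+1).choose j : ℝ) = 0 := by
    exact_mod_cast congrArg (Int.cast : ℤ → ℝ) (Int.alternating_sum_range_choose_of_ne (Nat.succ_ne_zero m))
  have key : ∀ j, (if Odd j then ((m+1).choose j : ℝ) else 0)
      = (((m+1).choose j : ℝ) - (-1:ℝ)^j * ((m+1).choose j : ℝ)) / 2 := by
    intro j
    rcases Nat.even_or_odd j with hj | hj
    · simp [Nat.not_odd_iff_even.mpr hj, hj.neg_one_pow]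
    · rw [if_pos hj, hj.neg_one_pow]; ring
  rw [Finset.sum_congr rfl (fun j _ => key j), ← Finset.sum_div, Finset.sum_sub_distrib, h1, h2]
  ring

noncomputable def cc (k : ℕ) : ℝ := ((2:ℝ) ^ k * k.factorial)⁻¹
noncomputable def bb (l : ℕ) : ℝ := if Even l then ((2:ℝ) ^ l * (l+1).factorial)⁻¹ else 0

lemma choose_sum_even (m : ℕ) :
    ∑ k ∈ Finset.range (m + 1), (if Even (m - k) then (((m+1).choose k : ℝ)) else 0) = 2 ^ m := by
  have hrefl := Finset.sum_range_reflect
    (fun k => (if Even (m - k) then (((m+1).choose k : ℝ)) else 0)) (m+1)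
  rw [← hrefl]
  have : ∀ k ∈ Finset.range (m+1),
      (if Even (m - (m + 1 - 1 - k)) then (((m+1).choose (m + 1 - 1 - k) : ℝ)) else 0)
        = (if Odd (k+1) then (((m+1).choose (k+1) : ℝ)) else 0) := by
    intro k hk
    rw [Finset.mem_range] at hk
    have hk' : k ≤ m := Nat.lt_succ_iff.mp hk
    have e1 : m + 1 - 1 - k = m - k := by omega
    have e2 : m - (m - k) = k := by omega
    have e3 : (m+1).choose (m - k) = (m+1).choose (k+1) := by
      rw [← Nat.choose_symm (by omega : k + 1 ≤ m + 1)]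
      congr 1; omega
    simp only [e1, e2, e3, Nat.odd_add_one, Nat.not_odd_iff_even]
  rw [Finset.sum_congr rfl this]
  have := odd_choose_sum m
  rw [Finset.sum_range_succ' (fun j => (if Odd j then ((m+1).choose j : ℝ) else 0)) (m+1)] at this
  simpa using this

lemma key_coeff (m : ℕ) :
    ∑ kl ∈ Finset.HasAntidiagonal.antidiagonal m, cc kl.1 * bb kl.2 = ((m+1).factorial : ℝ)⁻¹ := by
  rw [Finset.Nat.sum_antidiagonal_eq_sum_range_succ (fun k l => cc k * bb l)]
  have hterm : ∀ k ∈ Finset.range (m+1), cc k * bb (m - k)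
      = ((2:ℝ)^m * (m+1).factorial)⁻¹ * (if Even (m - k) then (((m+1).choose k : ℝ)) else 0) := by
    intro k hk
    rw [Finset.mem_range] at hk
    have hk' : k ≤ m := Nat.lt_succ_iff.mp hk
    unfold cc bb
    by_cases h : Even (m - k)
    · rw [if_pos h, if_pos h]
      have hfac : ((m+1).choose k : ℝ) * ((k.factorial : ℝ) * ((m-k+1).factorial : ℝ)) = ((m+1).factorial : ℝ) := by
        have := Nat.choose_mul_factorial_mul_factorial (by omega : k ≤ m + 1)
        have h2 : m + 1 - k = m - k + 1 := by omega
        rw [h2] at this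
        push_cast [← this]
        ring
      have hpow : (2:ℝ) ^ k * (2:ℝ) ^ (m - k) = (2:ℝ) ^ m := by
        rw [← pow_add]; congr 1; omega
      have hne : ∀ j : ℕ, ((j.factorial : ℝ)) ≠ 0 := fun j => Nat.cast_ne_zero.mpr j.factorial_ne_zero
      field_simp
      rw [← hfac, ← hpow]
      ring
    · rw [if_neg h, if_neg h]; ring
  rw [Finset.sum_congr rfl hterm, ← Finset.mul_sum, choose_sum_even]
  have h2 : ((2:ℝ)^m) ≠ 0 := by positivity
  field_simp

noncomputable def detCML (n : ℕ) : ContinuousMultilinearMap ℝ (fun _ : Fin n => (Fin n → ℝ)) ℝ :=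
  MultilinearMap.mkContinuous
    (Matrix.detRowAlternating : (Fin n → ℝ) [⋀^Fin n]→ₗ[ℝ] ℝ).toMultilinearMap
    (n.factorial) (by
      intro M
      have hdet : Matrix.detRowAlternating (R := ℝ) (n := Fin n) M = (Matrix.of M).det := rfl
      have : ((Matrix.detRowAlternating : (Fin n → ℝ) [⋀^Fin n]→ₗ[ℝ] ℝ)).toMultilinearMap M
          = (Matrix.of M).det := rfl
      rw [this, Matrix.det_apply]
      refine (norm_sum_le _ _).trans ?_
      have hterm : ∀ σ : Equiv.Perm (Fin n),
          ‖Equiv.Perm.sign σ • ∏ i, Matrix.of M (σ i) i‖ ≤ ∏ i : Fin n, ‖M i‖ := by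
        intro σ
        have h1 : ‖Equiv.Perm.sign σ • ∏ i, Matrix.of M (σ i) i‖ = ‖∏ i, Matrix.of M (σ i) i‖ := by
          rcases Int.units_eq_one_or (Equiv.Perm.sign σ) with h | h <;>
            simp [h, Units.smul_def, norm_neg]
        rw [h1]
        calc ‖∏ i, Matrix.of M (σ i) i‖ ≤ ∏ i : Fin n, ‖Matrix.of M (σ i) i‖ := by
              simpa using norm_prod_le' Finset.univ (by simp) (fun i => Matrix.of M (σ i) i)
          _ ≤ ∏ i : Fin n, ‖M (σ i)‖ := by
              refine Finset.prod_le_prod (fun i _ => norm_nonneg _) (fun i _ => ?_)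
              exact norm_le_pi_norm (M (σ i)) i
          _ = ∏ i : Fin n, ‖M i‖ := Equiv.prod_comp σ (fun i => ‖M i‖)
      refine (Finset.sum_le_sum fun σ _ => hterm σ).trans ?_
      rw [Finset.sum_const]
      simp [Fintype.card_perm])

lemma detCML_apply {n : ℕ} (M : Matrix (Fin n) (Fin n) ℝ) :
    detCML n (fun i => M i) = M.det := rfl

open NormedSpace in
theorem hasDerivAt_det_exp {n : ℕ} (B : Matrix (Fin n) (Fin n) ℝ) (t : ℝ) :
    HasDerivAt (fun t : ℝ => (exp (t • B)).det)
      (B.trace * (exp (t • B)).det) t := by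
  letI : SeminormedRing (Matrix (Fin n) (Fin n) ℝ) := Matrix.linftyOpSemiNormedRing
  letI : NormedRing (Matrix (Fin n) (Fin n) ℝ) := Matrix.linftyOpNormedRing
  letI : NormedAlgebra ℝ (Matrix (Fin n) (Fin n) ℝ) := Matrix.linftyOpNormedAlgebra
  letI : CompleteSpace (Matrix (Fin n) (Fin n) ℝ) := FiniteDimensional.complete ℝ _
  set M := exp (t • B) with hMdef
  have hexp : HasDerivAt (fun u : ℝ => exp (u • B)) (B * M) t :=
    hasDerivAt_exp_smul_const' B t
  -- row projections
  have hrow : ∀ i : Fin n, HasDerivAt (fun u : ℝ => exp (u • B) i) ((B * M) i) t := by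
    intro i
    let L : Matrix (Fin n) (Fin n) ℝ →ₗ[ℝ] (Fin n → ℝ) :=
      LinearMap.proj (R := ℝ) (φ := fun _ : Fin n => (Fin n → ℝ)) i
    have hproj := (LinearMap.toContinuousLinearMap L).hasFDerivAt
      (x := exp (t • B))
    exact hproj.comp_hasDerivAt t hexp
  have hF := HasFDerivAt.multilinear_comp (detCML n)
    (g := fun i (u : ℝ) => exp (u • B) i)
    (g' := fun i => ContinuousLinearMap.smulRight (1 : ℝ →L[ℝ] ℝ) ((B * M) i))
    (fun i => (hrow i).hasFDerivAt) (x := t)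
  have hD : HasDerivAt (fun u : ℝ => detCML n (fun i => exp (u • B) i))
      (∑ i : Fin n, detCML n (Function.update (fun j => M j) i ((B * M) i))) t := by
    have := hF.hasDerivAt
    simpa using this
  have hsum : (∑ i : Fin n, detCML n (Function.update (fun j => M j) i ((B * M) i)))
      = B.trace * M.det := by
    have hupd : ∀ i : Fin n,
        detCML n (Function.update (fun j => M j) i ((B * M) i))
          = (M.updateRow i ((B * M) i)).det := by
      intro i
      have : (Function.update (fun j => M j) i ((B * M) i))
          = fun j => (M.updateRow i ((B * M) i)) j := by
        funext j
        by_cases hj : j = i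
        · subst hj; simp [Matrix.updateRow_self]
        · simp [Function.update_of_ne hj, Matrix.updateRow_ne hj]
      rw [this]
      exact detCML_apply _
    have hrowBM : ∀ i : Fin n, (B * M) i = ∑ j : Fin n, B i j • M j := by
      intro i; funext k
      simp [Matrix.mul_apply, Finset.sum_apply]
    have : ∀ i : Fin n, (M.updateRow i ((B * M) i)).det = B i i * M.det := by
      intro i
      rw [hrowBM i, Matrix.det_updateRow_sum M i (fun j => B i j)]
      simp
    simp only [hupd, this]
    rw [Matrix.trace, ← Finset.sum_mul]
    rfl
  rw [hsum] at hD
  exact hD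

open NormedSpace in
theorem det_exp {n : ℕ} (B : Matrix (Fin n) (Fin n) ℝ) :
    (exp B).det = Real.exp B.trace := by
  have hf : ∀ t : ℝ, HasDerivAt
      (fun t : ℝ => (exp (t • B)).det * Real.exp (-(B.trace * t))) 0 t := by
    intro t
    have h1 := hasDerivAt_det_exp B t
    have h2 : HasDerivAt (fun t : ℝ => Real.exp (-(B.trace * t)))
        (-B.trace * Real.exp (-(B.trace * t))) t := by
      have ha : HasDerivAt (fun t : ℝ => -(B.trace * t)) (-B.trace) t := by
        have := ((hasDerivAt_id t).const_mul B.trace).neg; simp only [id, mul_one] at this; exact this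
      simpa [mul_comm] using ha.exp
    have := h1.mul h2
    exact this.congr_deriv (by ring)
  have hconst := is_const_of_deriv_eq_zero
    (f := fun t : ℝ => (exp (t • B)).det * Real.exp (-(B.trace * t)))
    (fun t => (hf t).differentiableAt) (fun t => (hf t).deriv) 1 0
  simp only [one_smul, zero_smul, mul_one, mul_zero, neg_zero, Real.exp_zero] at hconst
  have := congrArg (fun x => x * Real.exp B.trace) hconst
  simpa [mul_assoc, ← Real.exp_add] using this


open NormedSpace in
theorem series_factor {n : ℕ} (A : Matrix (Fin n) (Fin n) ℝ) :
    (∑' m : ℕ, (((m + 1).factorial : ℝ))⁻¹ • A ^ m)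
      = exp ((2:ℝ)⁻¹ • A) * ∑' m : ℕ, ((4 ^ m * (2 * m + 1).factorial : ℝ))⁻¹ • A ^ (2 * m) := by
  letI : SeminormedRing (Matrix (Fin n) (Fin n) ℝ) := Matrix.linftyOpSemiNormedRing
  letI : NormedRing (Matrix (Fin n) (Fin n) ℝ) := Matrix.linftyOpNormedRing
  letI : NormedAlgebra ℝ (Matrix (Fin n) (Fin n) ℝ) := Matrix.linftyOpNormedAlgebra
  letI : CompleteSpace (Matrix (Fin n) (Fin n) ℝ) := FiniteDimensional.complete ℝ _
  -- the exp factor as a tsum with coefficients cc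
  have hcoef : ∀ k : ℕ, ((k.factorial :ℝ))⁻¹ • ((2:ℝ)⁻¹ • A) ^ k = cc k • A ^ k := by
    intro k
    rw [smul_pow, smul_smul, cc, mul_inv, inv_pow]
    rw [mul_comm]
  have hexp : exp ((2:ℝ)⁻¹ • A) = ∑' k : ℕ, cc k • A ^ k := by
    rw [exp_eq_tsum ℝ]
    exact tsum_congr hcoef
  -- the sinh factor as a tsum with coefficients bb
  have hsh : (∑' m : ℕ, ((4 ^ m * (2 * m + 1).factorial : ℝ))⁻¹ • A ^ (2 * m))
      = ∑' l : ℕ, bb l • A ^ l := by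
    have hinj : Function.Injective (fun m : ℕ => 2 * m) := fun a b h => by
      simpa using h
    have hvan : Function.support (fun x => bb x • A ^ x)
        ⊆ Set.range (fun m : ℕ => 2 * m) := by
      intro x hx
      rcases Nat.even_or_odd x with ⟨r, hrr⟩ | hodd
      · exact ⟨r, by show 2 * r = x; omega⟩
      · exfalso
        apply hx
        have hne : ¬ Even x := Nat.not_even_iff_odd.mpr hodd
        show bb x • A ^ x = 0
        rw [bb, if_neg hne, zero_smul]
    rw [← hinj.tsum_eq hvan]
    refine tsum_congr fun m => ?_
    show ((4 ^ m * (2 * m + 1).factorial : ℝ))⁻¹ • A ^ (2 * m) = bb (2 * m) • A ^ (2 * m)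
    have h4 : ((4:ℝ) ^ m) = (2:ℝ) ^ (2 * m) := by
      rw [pow_mul]; norm_num
    rw [bb, if_pos (even_two_mul m), h4]
  -- summability in norm
  have hsummc : Summable (fun k => ‖cc k • A ^ k‖) := by
    have := norm_expSeries_summable' (𝕂 := ℝ) ((2:ℝ)⁻¹ • A)
    simpa only [hcoef] using this
  have hsummb : Summable (fun l => ‖bb l • A ^ l‖) := by
    refine Summable.of_nonneg_of_le (fun l => norm_nonneg _)
      (fun l => ?_) (norm_expSeries_summable' (𝕂 := ℝ) ((2:ℝ)⁻¹ • A))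
    have hccnn : 0 ≤ cc l := by rw [cc]; positivity
    have hble : |bb l| ≤ cc l := by
      rw [bb, cc]
      split_ifs with h
      · rw [abs_of_nonneg (by positivity)]
        have h2 : (0:ℝ) < 2 ^ l * l.factorial := by positivity
        apply inv_anti₀ h2
        have : (l.factorial : ℝ) ≤ ((l+1).factorial : ℝ) := by
          exact_mod_cast Nat.factorial_le (Nat.le_succ l)
        nlinarith [pow_pos (by norm_num : (0:ℝ) < 2) l]
      · simpa using hccnn
    calc ‖bb l • A ^ l‖ = |bb l| * ‖A ^ l‖ := by rw [norm_smul, Real.norm_eq_abs]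
      _ ≤ cc l * ‖A ^ l‖ := mul_le_mul_of_nonneg_right hble (norm_nonneg _)
      _ = ‖cc l • A ^ l‖ := by rw [norm_smul, Real.norm_eq_abs, abs_of_nonneg hccnn]
      _ = ‖((l.factorial : ℝ))⁻¹ • ((2:ℝ)⁻¹ • A) ^ l‖ := by rw [hcoef]
  rw [hexp, hsh]
  erw [tsum_mul_tsum_eq_tsum_sum_antidiagonal_of_summable_norm hsummc hsummb]
  refine tsum_congr fun m => ?_
  have hterm : ∀ kl ∈ Finset.HasAntidiagonal.antidiagonal m,
      (cc kl.1 • A ^ kl.1) * (bb kl.2 • A ^ kl.2) = (cc kl.1 * bb kl.2) • A ^ m := by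
    intro kl hkl
    rw [smul_mul_smul_comm, ← pow_add, Finset.HasAntidiagonal.mem_antidiagonal.mp hkl]
  rw [Finset.sum_congr rfl hterm, ← Finset.sum_smul, key_coeff]

/-- The determinant identity `det((e^A - 1)/A) = e^{tr A / 2} · det(sinh(A/2)/(A/2))`
at the level of everywhere-convergent matrix power series. -/
theorem statement0 (n : ℕ) (A : Matrix (Fin n) (Fin n) ℝ) :
    (∑' m : ℕ, (((m + 1).factorial : ℝ))⁻¹ • A ^ m).det
      = Real.exp (A.trace / 2) *
        (∑' m : ℕ, ((4 ^ m * (2 * m + 1).factorial : ℝ))⁻¹ • A ^ (2 * m)).det := by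
  rw [series_factor A, Matrix.det_mul, det_exp]
  have htr : ((2:ℝ)⁻¹ • A).trace = A.trace / 2 := by
    rw [Matrix.trace_smul, smul_eq_mul]; ring
  rw [htr]
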